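/- Let 0 < k ≤ 1 and β ≥ 1 be real numbers. Let T, T₁,…,T_{N-1} ≥ 0 satisfy T ≥ T₁ + ⋯ + T_{N-1}, and setting S_i = T_{i+1} + ⋯ + T_{N-1}, assume k·T_i ≥ S_i for all i = 1,…,N-2. Then, with h = ((1+k)^β - 1)/k^β, we have T^β ≥ T₁^β + h·T₂^β + h²·T₃^β + ⋯ + h^{N-2}·T_{N-1}^β. -/
import Mathlib

open Finset Real

private lemma diff_mono (β : ℝ) (hβ : 1 ≤ β) {s u c : ℝ} (hs : 0 ≤ s) (hsu : s ≤ u)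
    (hc : 0 ≤ c) : (s + c) ^ β - s ^ β ≤ (u + c) ^ β - u ^ β := by
  rcases eq_or_lt_of_le hc with rfl | hc
  · simp
  rcases eq_or_lt_of_le hsu with rfl | hsu
  · exact le_refl _
  have hu : 0 ≤ u := hs.trans hsu.le
  have hf := convexOn_rpow hβ
  have h1 : ((s + c) ^ β - s ^ β) / (s + c - s) ≤ ((u + c) ^ β - s ^ β) / (u + c - s) :=
    hf.secant_mono (a := s) (x := s + c) (y := u + c) (Set.mem_Ici.mpr hs)
      (Set.mem_Ici.mpr (by positivity)) (Set.mem_Ici.mpr (by positivity))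
      (by intro h; nlinarith) (by intro h; nlinarith) (by linarith)
  have h2 : (s ^ β - (u + c) ^ β) / (s - (u + c)) ≤ (u ^ β - (u + c) ^ β) / (u - (u + c)) :=
    hf.secant_mono (a := u + c) (x := s) (y := u) (Set.mem_Ici.mpr (by positivity))
      (Set.mem_Ici.mpr hs) (Set.mem_Ici.mpr hu)
      (by intro h; nlinarith) (by intro h; nlinarith) hsu.le
  have e1 : (s ^ β - (u + c) ^ β) / (s - (u + c)) = ((u + c) ^ β - s ^ β) / (u + c - s) := by
    rw [← neg_div_neg_eq]; ring_nf
  have e2 : (u ^ β - (u + c) ^ β) / (u - (u + c)) = ((u + c) ^ β - u ^ β) / c := by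
    rw [← neg_div_neg_eq]; ring_nf
  rw [e1, e2] at h2
  have h3 := h1.trans h2
  rw [show s + c - s = c by ring] at h3
  exact (div_le_div_iff_of_pos_right hc).mp h3

private lemma one_add_pow (k β : ℝ) (hk0 : 0 < k) (hβ : 1 ≤ β) {t : ℝ} (ht : 0 ≤ t)
    (htk : t ≤ k) : 1 + ((1 + k) ^ β - 1) / k ^ β * t ^ β ≤ (1 + t) ^ β := by
  rcases eq_or_lt_of_le ht with rfl | ht
  · simp [Real.zero_rpow (show β ≠ 0 by positivity)]
  have hkb : (0:ℝ) < k ^ β := Real.rpow_pos_of_pos hk0 β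
  have htb : (0:ℝ) < t ^ β := Real.rpow_pos_of_pos ht β
  have key : t ^ β * ((1 + k) ^ β - 1) ≤ k ^ β * ((1 + t) ^ β - 1) := by
    have e1 : t ^ β * (1 + k) ^ β = (t + t * k) ^ β := by
      rw [← Real.mul_rpow ht.le (by linarith)]; ring_nf
    have e2 : k ^ β * (1 + t) ^ β = (k + t * k) ^ β := by
      rw [← Real.mul_rpow hk0.le (by positivity)]; ring_nf
    have hd := diff_mono β hβ (s := t) (u := k) (c := t * k) ht.le htk (by positivity)
    nlinarith
  have h3 : ((1 + k) ^ β - 1) / k ^ β * t ^ β ≤ (1 + t) ^ β - 1 := by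
    rw [mul_comm, mul_div_assoc', div_le_iff₀ hkb]
    nlinarith
  linarith

private lemma key_ineq (k β : ℝ) (hk0 : 0 < k) (hβ : 1 ≤ β) {x y : ℝ} (hx : 0 ≤ x)
    (hy : 0 ≤ y) (hxy : y ≤ k * x) :
    x ^ β + ((1 + k) ^ β - 1) / k ^ β * y ^ β ≤ (x + y) ^ β := by
  rcases eq_or_lt_of_le hx with rfl | hx
  · have hy0 : y = 0 := le_antisymm (by linarith) hy
    subst hy0
    simp [Real.zero_rpow (show β ≠ 0 by positivity)]
  have ht : 0 ≤ y / x := by positivity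
  have htk : y / x ≤ k := by rw [div_le_iff₀ hx]; nlinarith
  have h := one_add_pow k β hk0 hβ ht htk
  have hxb : (0:ℝ) < x ^ β := Real.rpow_pos_of_pos hx β
  have e : (1 + y / x) ^ β * x ^ β = (x + y) ^ β := by
    rw [← Real.mul_rpow (by positivity) hx.le]
    congr 1; field_simp
  have e2 : (y / x) ^ β * x ^ β = y ^ β := by
    rw [← Real.mul_rpow (by positivity) hx.le, div_mul_cancel₀ _ (ne_of_gt hx)]
  calc x ^ β + ((1 + k) ^ β - 1) / k ^ β * y ^ β
      = (1 + ((1 + k) ^ β - 1) / k ^ β * (y / x) ^ β) * x ^ β := by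
        rw [add_mul, one_mul, mul_assoc, e2]
    _ ≤ (1 + y / x) ^ β * x ^ β := mul_le_mul_of_nonneg_right h hxb.le
    _ = (x + y) ^ β := e

private lemma h_nonneg (k β : ℝ) (hk0 : 0 < k) (hβ : 1 ≤ β) :
    0 ≤ ((1 + k) ^ β - 1) / k ^ β := by
  have h1 : (1:ℝ) ≤ (1 + k) ^ β := by
    calc (1:ℝ) = 1 ^ β := (Real.one_rpow β).symm
    _ ≤ (1 + k) ^ β := Real.rpow_le_rpow (by norm_num) (by linarith) (by linarith)
  have h2 := Real.rpow_pos_of_pos hk0 β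
  exact div_nonneg (by linarith) h2.le

private lemma aux (k β : ℝ) (hk0 : 0 < k) (hβ : 1 ≤ β) :
    ∀ (n : ℕ) (a : ℕ → ℝ) (m : ℕ) (T : ℝ), 0 ≤ T →
    (∀ i ∈ Finset.Icc m (m + n), 0 ≤ a i) →
    T ≥ ∑ i ∈ Finset.Icc m (m + n), a i →
    (∀ i ∈ Finset.Icc m (m + n - 1), k * a i ≥ ∑ j ∈ Finset.Icc (i + 1) (m + n), a j) →
    T ^ β ≥ ∑ i ∈ Finset.Icc m (m + n),
      (((1 + k) ^ β - 1) / k ^ β) ^ (i - m) * (a i) ^ β := by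
  intro n
  induction n with
  | zero =>
    intro a m T hT ha hsum _
    simp only [Nat.add_zero, Finset.Icc_self, Finset.sum_singleton] at *
    rw [Nat.sub_self, pow_zero, one_mul]
    exact Real.rpow_le_rpow (ha m (Finset.mem_singleton_self m)) hsum (by linarith)
  | succ n ih =>
    intro a m T hT ha hsum hcond
    have hh0 : 0 ≤ ((1 + k) ^ β - 1) / k ^ β := h_nonneg k β hk0 hβ
    have hmm : m ≤ m + (n + 1) := by omega
    have hsplit : Finset.Icc m (m + (n + 1)) = insert m (Finset.Icc (m + 1) (m + 1 + n)) := by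
      rw [show m + 1 + n = m + (n + 1) by omega, Finset.Icc_add_one_left_eq_Ioc,
        Finset.Ioc_insert_left hmm]
    have hnotmem : m ∉ Finset.Icc (m + 1) (m + 1 + n) := by
      simp
    set S := ∑ i ∈ Finset.Icc (m + 1) (m + 1 + n), a i with hS
    have haS : ∀ i ∈ Finset.Icc (m + 1) (m + 1 + n), 0 ≤ a i := by
      intro i hi
      apply ha
      simp only [Finset.mem_Icc] at hi ⊢
      omega
    have hS0 : 0 ≤ S := Finset.sum_nonneg haS
    have ham : 0 ≤ a m := ha m (Finset.mem_Icc.mpr ⟨le_refl m, hmm⟩)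
    have hcm : S ≤ k * a m := by
      have := hcond m (Finset.mem_Icc.mpr ⟨le_refl m, by omega⟩)
      rw [hS, show m + 1 + n = m + (n + 1) by omega]
      exact this
    have hTsum : a m + S ≤ T := by
      rw [hsplit, Finset.sum_insert hnotmem] at hsum
      linarith
    -- IH applied to S with base m+1
    have hIH : S ^ β ≥ ∑ i ∈ Finset.Icc (m + 1) (m + 1 + n),
        (((1 + k) ^ β - 1) / k ^ β) ^ (i - (m + 1)) * (a i) ^ β := by
      apply ih a (m + 1) S hS0 haS (le_refl S)
      intro i hi
      have := hcond i (by simp only [Finset.mem_Icc] at hi ⊢; omega)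
      rw [show m + 1 + n = m + (n + 1) by omega]
      exact this
    have hkey : (a m) ^ β + ((1 + k) ^ β - 1) / k ^ β * S ^ β ≤ (a m + S) ^ β :=
      key_ineq k β hk0 hβ ham hS0 hcm
    have hTb : (a m + S) ^ β ≤ T ^ β :=
      Real.rpow_le_rpow (by linarith) hTsum (by linarith)
    rw [hsplit, Finset.sum_insert hnotmem, Nat.sub_self, pow_zero, one_mul]
    have hstep : ∑ i ∈ Finset.Icc (m + 1) (m + 1 + n),
        (((1 + k) ^ β - 1) / k ^ β) ^ (i - m) * (a i) ^ β
        = ((1 + k) ^ β - 1) / k ^ β * ∑ i ∈ Finset.Icc (m + 1) (m + 1 + n),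
          (((1 + k) ^ β - 1) / k ^ β) ^ (i - (m + 1)) * (a i) ^ β := by
    
      rw [Finset.mul_sum]
      apply Finset.sum_congr rfl
      intro i hi
      simp only [Finset.mem_Icc] at hi
      rw [← mul_assoc, ← pow_succ']
      congr 2
      omega
    rw [hstep]
    have := mul_le_mul_of_nonneg_left hIH hh0
    linarith

theorem stmt_12 (k β : ℝ) (hk0 : 0 < k) (hk1 : k ≤ 1) (hβ : 1 ≤ β)
    (N : ℕ) (hN : 2 ≤ N) (T : ℝ) (a : ℕ → ℝ)
    (hT : 0 ≤ T) (ha : ∀ i ∈ Finset.Icc 1 (N - 1), 0 ≤ a i)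
    (hmono : T ≥ ∑ i ∈ Finset.Icc 1 (N - 1), a i)
    (hcond : ∀ i ∈ Finset.Icc 1 (N - 2),
      k * a i ≥ ∑ j ∈ Finset.Icc (i + 1) (N - 1), a j) :
    T ^ β ≥ ∑ i ∈ Finset.Icc 1 (N - 1),
      (((1 + k) ^ β - 1) / k ^ β) ^ (i - 1) * (a i) ^ β := by
  have h1 : N - 1 = 1 + (N - 2) := by omega
  have h2 : N - 2 = 1 + (N - 2) - 1 := by omega
  have := aux k β hk0 hβ (N - 2) a 1 T hT (by rw [← h1]; exact ha)
    (by rw [← h1]; exact hmono) (by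
      rw [← h1]
      intro i hi
      exact hcond i (by simp only [Finset.mem_Icc] at hi ⊢; omega))
  rw [← h1] at this
  exact this
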